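/- Let μ be the uniform probability distribution on the closed unit ball 𝔹^d ⊂ ℝ^d with d ≥ 2. There is a constant c_d > 0 (depending only on d) such that for every nonzero δ ∈ ℝ^d with ‖δ‖ ≥ 1, if V is sampled from μ then ℙ(‖V‖ ≥ 3/4 and |⟨V, δ/‖δ‖⟩| ≤ 1/(8‖δ‖)) ≥ c_d/‖δ‖. -/

import Mathlib

open MeasureTheory
open scoped RealInnerProductSpace

set_option maxHeartbeats 1000000 in
theorem uniform_slab_probability (d : ℕ) (hd : 2 ≤ d) :
    ∃ c : ℝ, 0 < c ∧
      ∀ δ : EuclideanSpace ℝ (Fin d), 1 ≤ ‖δ‖ →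
        ENNReal.ofReal (c / ‖δ‖) ≤
          ((volume (Metric.closedBall (0 : EuclideanSpace ℝ (Fin d)) 1))⁻¹ •
              volume.restrict (Metric.closedBall (0 : EuclideanSpace ℝ (Fin d)) 1))
            {x : EuclideanSpace ℝ (Fin d) |
              3 / 4 ≤ ‖x‖ ∧ abs ⟪x, ‖δ‖⁻¹ • δ⟫ ≤ 1 / (8 * ‖δ‖)} := by
  haveI : NeZero d := ⟨by omega⟩
  have hdR : (2:ℝ) ≤ (d:ℝ) := by exact_mod_cast hd
  have h01 : (0 : Fin d) ≠ 1 := by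
    simp [Fin.ext_iff, Fin.val_one', Nat.mod_eq_of_lt (by omega : 1 < d)]
  set cb : Set (EuclideanSpace ℝ (Fin d)) :=
    Metric.closedBall (0 : EuclideanSpace ℝ (Fin d)) 1 with hcb
  set V : ENNReal := volume cb with hVdef
  have hV0 : V ≠ 0 := by
    have h : (0:ENNReal) < V :=
      lt_of_lt_of_le (Metric.measure_ball_pos volume 0 one_pos)
        (measure_mono Metric.ball_subset_closedBall)
    exact h.ne'
  have hVtop : V ≠ ⊤ := (isCompact_closedBall _ _).measure_lt_top.ne
  set K : ℝ := V.toReal with hK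
  have hK0 : 0 < K := ENNReal.toReal_pos hV0 hVtop
  set ε : ℝ := 1 / (8 * d) with hε
  have hε0 : 0 < ε := by positivity
  refine ⟨(1/128) * ε ^ (d - 2) / K, by positivity, ?_⟩
  intro δ hδ
  have hδ0 : (0:ℝ) < ‖δ‖ := lt_of_lt_of_le one_pos hδ
  set u : EuclideanSpace ℝ (Fin d) := ‖δ‖⁻¹ • δ with hu
  have hu1 : ‖u‖ = 1 := by
    rw [hu, norm_smul, norm_inv, norm_norm, inv_mul_cancel₀ hδ0.ne']
  set t : ℝ := 1 / (8 * ‖δ‖) with ht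
  have ht0 : 0 < t := by positivity
  have ht8 : t ≤ 1/8 := by
    rw [ht, div_le_div_iff₀ (by positivity) (by norm_num)]
    nlinarith
  -- the rotation
  obtain ⟨R, hRe⟩ : ∃ R : EuclideanSpace ℝ (Fin d) ≃ₗᵢ[ℝ] EuclideanSpace ℝ (Fin d),
      R (EuclideanSpace.single 0 1) = u := by
    have hcard : Module.finrank ℝ (EuclideanSpace ℝ (Fin d)) = Fintype.card (Fin d) := by
      simp
    have horth : Orthonormal ℝ (({0} : Set (Fin d)).restrict (fun _ => u)) := by
      constructor
      · intro i; exact hu1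
      · intro i j hij
        exact absurd (Subtype.ext (by rw [i.2, j.2])) hij
    obtain ⟨b, hb⟩ := horth.exists_orthonormalBasis_extension_of_card_eq hcard
    exact ⟨b.repr.symm, by rw [b.repr_symm_single]; exact hb 0 rfl⟩
  -- the box
  set I : Fin d → Set ℝ := fun i =>
    if i = 0 then Set.Icc (-t) t else if i = 1 then Set.Icc (3/4 : ℝ) (25/32) else Set.Icc 0 ε
    with hI
  set box : Set (EuclideanSpace ℝ (Fin d)) :=
    (MeasurableEquiv.toLp 2 (Fin d → ℝ)).symm ⁻¹' (Set.pi Set.univ I) with hbox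
  set S : Set (EuclideanSpace ℝ (Fin d)) :=
    {x : EuclideanSpace ℝ (Fin d) | 3 / 4 ≤ ‖x‖ ∧ |⟪x, u⟫| ≤ t} with hS
  have h1mem : (1:Fin d) ∈ Finset.univ.erase (0:Fin d) :=
    Finset.mem_erase.mpr ⟨h01.symm, Finset.mem_univ 1⟩
  -- box lands in S ∩ cb after rotation
  have hsub : box ⊆ ⇑R ⁻¹' (S ∩ cb) := by
    intro x hx
    have hx' : ∀ i, x i ∈ I i := fun i => hx i (Set.mem_univ i)
    have hx0 : x 0 ∈ Set.Icc (-t) t := by simpa [hI] using hx' 0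
    have hx1 : x 1 ∈ Set.Icc (3/4 : ℝ) (25/32) := by simpa [hI, h01.symm] using hx' 1
    have hxi : ∀ i : Fin d, i ≠ 0 → i ≠ 1 → x i ∈ Set.Icc (0:ℝ) ε := by
      intro i hi0 hi1; simpa [hI, hi0, hi1] using hx' i
    have hnorm : ‖x‖ = Real.sqrt (∑ i, x i ^ 2) := by
      rw [EuclideanSpace.norm_eq]; simp [sq_abs]
    have hlow : 3/4 ≤ ‖x‖ := by
      have h1 : (3/4:ℝ)^2 ≤ ∑ i, x i ^ 2 := by
        have h2 : (3/4:ℝ)^2 ≤ x 1 ^ 2 := by nlinarith [hx1.1, hx1.2]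
        exact h2.trans (Finset.single_le_sum (fun i _ => sq_nonneg (x i)) (Finset.mem_univ 1))
      calc (3/4:ℝ) = Real.sqrt ((3/4)^2) := by rw [Real.sqrt_sq (by norm_num)]
        _ ≤ Real.sqrt (∑ i, x i ^ 2) := Real.sqrt_le_sqrt h1
        _ = ‖x‖ := hnorm.symm
    have hhigh : ‖x‖ ≤ 1 := by
      have hsplit : ∑ i, x i ^ 2
          = x 0 ^ 2 + (x 1 ^ 2 + ∑ i ∈ (Finset.univ.erase 0).erase 1, x i ^ 2) := by
        rw [← Finset.add_sum_erase _ _ (Finset.mem_univ (0:Fin d)),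
            ← Finset.add_sum_erase _ _ h1mem]
      have htail : ∑ i ∈ (Finset.univ.erase (0:Fin d)).erase 1, x i ^ 2 ≤ (d:ℝ) * ε ^ 2 := by
        calc ∑ i ∈ (Finset.univ.erase (0:Fin d)).erase 1, x i ^ 2
            ≤ ((Finset.univ.erase (0:Fin d)).erase 1).card • (ε ^ 2) := by
              refine Finset.sum_le_card_nsmul _ _ _ ?_
              intro i hi
              have hi1 := (Finset.mem_erase.mp hi).1
              have hi0 := (Finset.mem_erase.mp (Finset.mem_erase.mp hi).2).1
              have hmem := hxi i hi0 hi1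
              exact pow_le_pow_left₀ hmem.1 hmem.2 2
          _ = (((Finset.univ.erase (0:Fin d)).erase 1).card : ℝ) * ε ^ 2 := by
              rw [nsmul_eq_mul]
          _ ≤ (d:ℝ) * ε ^ 2 := by
              have hcd : ((Finset.univ.erase (0:Fin d)).erase 1).card ≤ d := by
                calc ((Finset.univ.erase (0:Fin d)).erase 1).card
                    ≤ (Finset.univ : Finset (Fin d)).card :=
                      Finset.card_le_card (fun i hi =>
                        Finset.mem_univ i)
                  _ = d := by simp
              exact mul_le_mul_of_nonneg_right (by exact_mod_cast hcd) (sq_nonneg ε)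
      have hεd : (d:ℝ) * ε ^ 2 ≤ 1/128 := by
        have h1 : (d:ℝ) * ε ^ 2 = 1 / (64 * d) := by
          rw [hε]; field_simp; ring
        rw [h1, div_le_div_iff₀ (by positivity) (by norm_num)]
        nlinarith
      have hsb : ∑ i, x i ^ 2 ≤ 1 := by
        have hx0sq : x 0 ^ 2 ≤ t ^ 2 := sq_le_sq' hx0.1 hx0.2
        have ht2 : t ^ 2 ≤ (1/8:ℝ)^2 := pow_le_pow_left₀ ht0.le ht8 2
        have hx1sq : x 1 ^ 2 ≤ (25/32:ℝ)^2 := sq_le_sq' (by linarith [hx1.1]) hx1.2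
        rw [hsplit]; nlinarith
      calc ‖x‖ = Real.sqrt (∑ i, x i ^ 2) := hnorm
        _ ≤ Real.sqrt 1 := Real.sqrt_le_sqrt hsb
        _ = 1 := Real.sqrt_one
    have hinner : ⟪R x, u⟫ = x 0 := by
      rw [← hRe, LinearIsometryEquiv.inner_map_map]
      simp [EuclideanSpace.inner_single_right]
    constructor
    · refine ⟨?_, ?_⟩
      · rw [LinearIsometryEquiv.norm_map]; exact hlow
      · rw [hinner]; exact abs_le.mpr ⟨hx0.1, hx0.2⟩
    · rw [hcb, Metric.mem_closedBall, dist_zero_right, LinearIsometryEquiv.norm_map]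
      exact hhigh
  -- S ∩ cb is measurable
  have hScb : MeasurableSet (S ∩ cb) := by
    refine MeasurableSet.inter ?_ measurableSet_closedBall
    have hc1 : Continuous fun x : EuclideanSpace ℝ (Fin d) => ‖x‖ := continuous_norm
    have hc2 : Continuous fun x : EuclideanSpace ℝ (Fin d) => |⟪x, u⟫| :=
      (continuous_id.inner continuous_const).abs
    exact ((isClosed_le continuous_const hc1).measurableSet).inter
      ((isClosed_le hc2 continuous_const).measurableSet)
  -- volume of box
  have hIbox : MeasurableSet (Set.pi Set.univ I) := by
    refine MeasurableSet.univ_pi fun i => ?_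
    simp only [hI]
    split
    · exact measurableSet_Icc
    split
    · exact measurableSet_Icc
    · exact measurableSet_Icc
  have hvolbox : volume box = ENNReal.ofReal (2 * t * ((1/32) * ε ^ (d - 2))) := by
    rw [hbox,
      (EuclideanSpace.volume_preserving_symm_measurableEquiv_toLp (Fin d)).measure_preimage
        hIbox.nullMeasurableSet,
      volume_pi_pi]
    rw [← Finset.mul_prod_erase _ _ (Finset.mem_univ (0:Fin d)),
        ← Finset.mul_prod_erase _ _ h1mem]
    have e0 : volume (I 0) = ENNReal.ofReal (2 * t) := by
      rw [show I 0 = Set.Icc (-t) t by simp [hI], Real.volume_Icc]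
      congr 1; ring
    have e1 : volume (I 1) = ENNReal.ofReal (1/32) := by
      rw [show I 1 = Set.Icc (3/4:ℝ) (25/32) by simp [hI, h01.symm], Real.volume_Icc]
      norm_num
    have etail : ∏ i ∈ (Finset.univ.erase (0:Fin d)).erase 1, volume (I i)
        = ENNReal.ofReal ε ^ (d - 2) := by
      have hcongr : ∀ i ∈ (Finset.univ.erase (0:Fin d)).erase 1,
          volume (I i) = ENNReal.ofReal ε := by
        intro i hi
        have hi1 := (Finset.mem_erase.mp hi).1
        have hi0 := (Finset.mem_erase.mp (Finset.mem_erase.mp hi).2).1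
        rw [show I i = Set.Icc (0:ℝ) ε by simp [hI, hi0, hi1], Real.volume_Icc]
        norm_num
      rw [Finset.prod_congr rfl hcongr, Finset.prod_const]
      congr 1
      rw [Finset.card_erase_of_mem h1mem, Finset.card_erase_of_mem (Finset.mem_univ _),
          Finset.card_univ, Fintype.card_fin]
      omega
    rw [e0, e1, etail, ← ENNReal.ofReal_pow hε0.le, ← ENNReal.ofReal_mul (by norm_num),
        ← ENNReal.ofReal_mul (by positivity)]
  -- main inequality
  have hmain : ENNReal.ofReal ((1/128) * ε ^ (d-2) / K / ‖δ‖ * K)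
      ≤ (volume.restrict cb) S := by
    rw [Measure.restrict_apply' measurableSet_closedBall]
    calc ENNReal.ofReal ((1/128) * ε ^ (d-2) / K / ‖δ‖ * K)
        = volume box := by
          rw [hvolbox]
          congr 1
          rw [ht]
          field_simp
          ring
      _ ≤ volume (⇑R ⁻¹' (S ∩ cb)) := measure_mono hsub
      _ = volume (S ∩ cb) := R.measurePreserving.measure_preimage hScb.nullMeasurableSet
  rw [Measure.smul_apply, smul_eq_mul]
  calc ENNReal.ofReal ((1/128) * ε ^ (d-2) / K / ‖δ‖)
      = V⁻¹ * ENNReal.ofReal ((1/128) * ε ^ (d-2) / K / ‖δ‖ * K) := by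
        rw [ENNReal.ofReal_mul' hK0.le, hK, ENNReal.ofReal_toReal hVtop,
            mul_comm (ENNReal.ofReal _) V, ← mul_assoc, ENNReal.inv_mul_cancel hV0 hVtop,
            one_mul]
    _ ≤ V⁻¹ * (volume.restrict cb) S := mul_le_mul_right hmain _
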